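/- arXiv:2509.14421 — 2 statements merged into one kernel-verified Lean document; each statement's English description precedes it below -/
import Mathlib

section
/- Let A be symmetric positive definite 3×3, v ≠ 0, r ∈ ℝ³ with rᵀAr > c², c > 0. If there exists t₀ ≥ 0 such that (r − t₀·v)ᵀA(r − t₀·v) ≤ c², then (vᵀAv)(rᵀAr − c²) − (rᵀAv)² ≤ 0 and rᵀAv > 0. -/
open Matrix

theorem collision_cone_necessity
    (A : Matrix (Fin 3) (Fin 3) ℝ) (hA : A.PosDef)
    (v : Fin 3 → ℝ) (hv : v ≠ 0) (r : Fin 3 → ℝ)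
    (c : ℝ) (hc : 0 < c) (hout : r ⬝ᵥ A *ᵥ r > c ^ 2)
    (t₀ : ℝ) (ht₀ : 0 ≤ t₀)
    (hcoll : (r - t₀ • v) ⬝ᵥ A *ᵥ (r - t₀ • v) ≤ c ^ 2) :
    (v ⬝ᵥ A *ᵥ v) * (r ⬝ᵥ A *ᵥ r - c ^ 2) - (r ⬝ᵥ A *ᵥ v) ^ 2 ≤ 0 ∧
      0 < r ⬝ᵥ A *ᵥ v := by
  set a := v ⬝ᵥ A *ᵥ v with ha
  set b := r ⬝ᵥ A *ᵥ v with hb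
  set q := r ⬝ᵥ A *ᵥ r with hq
  have ha0 : 0 < a := hA.dotProduct_mulVec_pos hv
  have hsym : v ⬝ᵥ A *ᵥ r = b := by
    have hAt : Aᵀ = A := by simpa [Matrix.IsSymm] using hA.1
    rw [hb, dotProduct_mulVec, ← mulVec_transpose, hAt, dotProduct_comm]
  have hexp : (r - t₀ • v) ⬝ᵥ A *ᵥ (r - t₀ • v) = q - 2 * t₀ * b + t₀ ^ 2 * a := by
    simp only [sub_dotProduct, mulVec_sub, dotProduct_sub, smul_dotProduct,
      mulVec_smul, dotProduct_smul, smul_eq_mul, hsym]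
    ring
  rw [hexp] at hcoll
  have key : q - c ^ 2 + t₀ ^ 2 * a ≤ 2 * t₀ * b := by linarith
  have hb0 : 0 < b := by
    have ht : 0 < t₀ := by
      by_contra h
      have : t₀ = 0 := le_antisymm (not_lt.mp h) ht₀
      rw [this] at key; nlinarith
    nlinarith
  refine ⟨?_, hb0⟩
  have ht : 0 < t₀ := by nlinarith
  nlinarith [sq_nonneg (t₀ * a - b), sq_nonneg t₀]
end

section
/- Let A be symmetric positive definite 3×3, r, v ∈ ℝ³, and c > 0. Define h(r,v) = (vᵀAv)(rᵀAr − c²) − (rᵀAv)². If v = 0 then h(r,v) = 0, and if rᵀAr > c² and h(r,v) > 0 then for all t ≥ 0, (r − t·v)ᵀA(r − t·v) > c². -/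
open Matrix

theorem cbf_positivity_implies_no_collision
    (A : Matrix (Fin 3) (Fin 3) ℝ) (hA : A.PosDef)
    (r v : Fin 3 → ℝ) (c : ℝ) (hc : 0 < c)
    (h : (Fin 3 → ℝ) → (Fin 3 → ℝ) → ℝ)
    (hdef : h = fun r v =>
      (v ⬝ᵥ A *ᵥ v) * (r ⬝ᵥ A *ᵥ r - c ^ 2) - (r ⬝ᵥ A *ᵥ v) ^ 2) :
    (v = 0 → h r v = 0) ∧
      (r ⬝ᵥ A *ᵥ r > c ^ 2 → 0 < h r v →
        ∀ t : ℝ, 0 ≤ t → (r - t • v) ⬝ᵥ A *ᵥ (r - t • v) > c ^ 2) := by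
  subst hdef
  constructor
  · intro hv
    simp [hv]
  · intro hr hh t ht
    simp only at hh
    have hsym : v ⬝ᵥ A *ᵥ r = r ⬝ᵥ A *ᵥ v := by
      have hAt : Aᵀ = A := by have h1 : A.IsSymm := (by simpa using hA.1); exact h1
      rw [Matrix.dotProduct_mulVec, ← Matrix.mulVec_transpose, hAt,
        dotProduct_comm]
    have hvAv : 0 < v ⬝ᵥ A *ᵥ v := by
      rcases eq_or_ne v 0 with hv | hv
      · exfalso; simp [hv] at hh
      · simpa using hA.dotProduct_mulVec_pos hv
    have hexp : (r - t • v) ⬝ᵥ A *ᵥ (r - t • v) =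
        r ⬝ᵥ A *ᵥ r - 2 * t * (r ⬝ᵥ A *ᵥ v) + t ^ 2 * (v ⬝ᵥ A *ᵥ v) := by
      simp [Matrix.mulVec_sub, Matrix.mulVec_smul, dotProduct_sub, sub_dotProduct,
        dotProduct_smul, smul_dotProduct, smul_eq_mul, hsym]
      ring
    rw [hexp]
    nlinarith [sq_nonneg (t * (v ⬝ᵥ A *ᵥ v) - r ⬝ᵥ A *ᵥ v), sq_nonneg (r ⬝ᵥ A *ᵥ v)]
end
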